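/- Let G be a banner-free graph, let T be the set of all vertices of G that belong to some co-triangle of G, let C be a co-triangle of G, and let v and x be two vertices of G not in T. If v is adjacent to all three vertices of C and x is not adjacent to v, then x is adjacent to all three vertices of C. -/

import Mathlib

open SimpleGraph

/-- The banner: a chordless 4-cycle 0-1-2-3-0 together with a fifth vertex 4
adjacent to exactly one vertex (vertex 0) of the cycle. -/
def banner : SimpleGraph (Fin 5) :=
  SimpleGraph.fromRel (fun i j =>
    (i = 0 ∧ j = 1) ∨ (i = 1 ∧ j = 2) ∨ (i = 2 ∧ j = 3) ∨ (i = 3 ∧ j = 0) ∨ (i = 0 ∧ j = 4))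

/-- A graph is banner-free if it has no induced subgraph isomorphic to the banner. -/
def BannerFree {V : Type*} (G : SimpleGraph V) : Prop := ¬ Nonempty (banner ↪g G)

/-- A graph is C5-free if it has no induced subgraph isomorphic to the chordless 5-cycle. -/
def C5Free {V : Type*} (G : SimpleGraph V) : Prop :=
  ¬ Nonempty (SimpleGraph.cycleGraph 5 ↪g G)

/-- A graph is odd-hole-free if it has no induced chordless cycle of odd length `n ≥ 5`
(odd holes are the odd chordless cycles with at least four, hence at least five, vertices). -/
def OddHoleFree {V : Type*} (G : SimpleGraph V) : Prop :=
  ∀ n : ℕ, 5 ≤ n → Odd n → ¬ Nonempty (SimpleGraph.cycleGraph n ↪g G)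

/-- `A` is an odd antihole of `G`: the subgraph induced by `A` is isomorphic to the
complement of a chordless cycle on an odd number `n ≥ 5` of vertices. -/
def IsOddAntihole {V : Type*} (G : SimpleGraph V) (A : Set V) : Prop :=
  ∃ n : ℕ, 5 ≤ n ∧ Odd n ∧ Nonempty ((SimpleGraph.cycleGraph n)ᶜ ≃g G.induce A)

/-- `H` is a homogeneous set of `G`: `2 ≤ |H| < |V(G)|` and every vertex outside `H`
is adjacent to all vertices of `H` or to none of them. -/
def IsHomogeneous {V : Type*} (G : SimpleGraph V) (H : Set V) : Prop :=
  2 ≤ H.ncard ∧ H ≠ Set.univ ∧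
    ∀ v ∉ H, (∀ h ∈ H, G.Adj v h) ∨ (∀ h ∈ H, ¬ G.Adj v h)

/-- A graph is perfect if every induced subgraph has chromatic number equal to
its clique number. -/
def IsPerfect {V : Type*} (G : SimpleGraph V) : Prop :=
  ∀ S : Set V, (G.induce S).chromaticNumber = ((G.induce S).cliqueNum : ℕ∞)

/-- A graph is perfectly divisible if every induced subgraph `G[S]` contains a set `X`
of vertices meeting all largest cliques of `G[S]` and inducing a perfect graph. -/
def PerfectlyDivisible {V : Type*} (G : SimpleGraph V) : Prop :=
  ∀ S : Set V, ∃ X ⊆ S, IsPerfect (G.induce X) ∧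
    ∀ t : Finset V, ↑t ⊆ S → G.IsNClique ((G.induce S).cliqueNum) t → ∃ x ∈ X, x ∈ t

/-- A graph is `k`-divisible if the vertex set of each of its induced subgraphs `G[S]`
having at least one edge can be partitioned into `k` sets, none of which contains a
clique of size `ω(G[S])`.  (A graph with no edges is trivially `k`-divisible.) -/
def KDivisible {V : Type*} (G : SimpleGraph V) (k : ℕ) : Prop :=
  ∀ S : Set V, (∃ a ∈ S, ∃ b ∈ S, G.Adj a b) →
    ∃ P : Fin k → Set V, (∀ v ∈ S, ∃! i, v ∈ P i) ∧
      ∀ i, P i ⊆ S ∧ ¬ ∃ t : Finset V, ↑t ⊆ P i ∧ G.IsNClique ((G.induce S).cliqueNum) t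

/-- The maximum total weight `α_w(G)` of a stable (independent) set of the weighted
graph `G`; stable sets of `G` are exactly the cliques of the complement of `G`. -/
noncomputable def alphaW {V : Type*} (G : SimpleGraph V) (w : V → ℤ) : ℤ :=
  sSup {x : ℤ | ∃ s : Finset V, Gᶜ.IsClique (↑s : Set V) ∧ x = ∑ v ∈ s, w v}

/-- `C` is a clique cutset of the connected graph `G` if `C` is a clique and
deleting `C` from `G` leaves a disconnected graph. -/
def IsCliqueCutset {V : Type*} (G : SimpleGraph V) (C : Set V) : Prop :=
  G.Connected ∧ G.IsClique C ∧ ¬ (G.induce Cᶜ).Preconnected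

set_option maxHeartbeats 1000000 in
/-- Let `G` be a banner-free graph, let `T` be the set of vertices of `G`
belonging to some co-triangle, let `C` be a co-triangle of `G`, and let `v, x ∉ T`.
If `v` is adjacent to all three vertices of `C` and `x` is not adjacent to `v`, then `x`
is adjacent to all three vertices of `C`. -/
theorem stmt_19 {V : Type*} [Fintype V] (G : SimpleGraph V)
    (hbf : BannerFree G)
    (T : Set V) (hT : T = {v : V | ∃ t : Finset V, Gᶜ.IsNClique 3 t ∧ v ∈ t})
    (C : Finset V) (hC : Gᶜ.IsNClique 3 C)
    (v x : V) (hv : v ∉ T) (hx : x ∉ T)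
    (hvC : ∀ c ∈ C, G.Adj v c) (hxv : ¬ G.Adj x v) :
    ∀ c ∈ C, G.Adj x c := by
  classical
  intro c0 hc0
  by_contra hxc0
  have hxT : ¬ ∃ t : Finset V, Gᶜ.IsNClique 3 t ∧ x ∈ t := by
    rw [hT] at hx; exact hx
  have hxC : x ∉ C := fun h => hxT ⟨C, hC, h⟩
  have hxv' : x ≠ v := by rintro rfl; exact hxc0 (hvC c0 hc0)
  have stable : ∀ p ∈ C, ∀ q ∈ C, p ≠ q → ¬ G.Adj p q := by
    intro p hp q hq hne
    exact ((SimpleGraph.compl_adj G p q).mp (hC.1 hp hq hne)).2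
  have hcard : (C.erase c0).card = 2 := by
    rw [Finset.card_erase_of_mem hc0, hC.2]
  obtain ⟨d, e, hde, hC'⟩ := Finset.card_eq_two.mp hcard
  have hdE : d ∈ C.erase c0 := hC' ▸ by simp
  have heE : e ∈ C.erase c0 := hC' ▸ by simp
  have hdC : d ∈ C := Finset.mem_of_mem_erase hdE
  have heC : e ∈ C := Finset.mem_of_mem_erase heE
  have hdc0 : d ≠ c0 := Finset.ne_of_mem_erase hdE
  have hec0 : e ≠ c0 := Finset.ne_of_mem_erase heE
  have hadj : ∀ p ∈ C.erase c0, G.Adj x p := by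
    intro p hp
    by_contra h
    refine hxT ⟨{x, c0, p}, ?_, by simp⟩
    rw [SimpleGraph.is3Clique_triple_iff]
    refine ⟨?_, ?_, ?_⟩ <;> rw [SimpleGraph.compl_adj]
    · exact ⟨fun h' => hxC (h' ▸ hc0), hxc0⟩
    · exact ⟨fun h' => hxC (h' ▸ Finset.mem_of_mem_erase hp), h⟩
    · exact ⟨(Finset.ne_of_mem_erase hp).symm,
        stable c0 hc0 p (Finset.mem_of_mem_erase hp) (Finset.ne_of_mem_erase hp).symm⟩
  have hxd : G.Adj x d := hadj d hdE
  have hxe : G.Adj x e := hadj e heE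
  have hvd : G.Adj v d := hvC d hdC
  have hve : G.Adj v e := hvC e heC
  have hvc0 : G.Adj v c0 := hvC c0 hc0
  have hvd' : v ≠ d := fun h => (G.irrefl (h ▸ hvd))
  have hve' : v ≠ e := fun h => (G.irrefl (h ▸ hve))
  have hvc0' : v ≠ c0 := fun h => (G.irrefl (h ▸ hvc0))
  have hxd' : x ≠ d := fun h => hxC (h ▸ hdC)
  have hxe' : x ≠ e := fun h => hxC (h ▸ heC)
  have hxc0' : x ≠ c0 := fun h => hxC (h ▸ hc0)
  have hDE : ¬ G.Adj d e := stable d hdC e heC hde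
  have hC0D : ¬ G.Adj c0 d := stable c0 hc0 d hdC hdc0.symm
  have hC0E : ¬ G.Adj c0 e := stable c0 hc0 e heC hec0.symm
  have hxv2 : ¬ G.Adj v x := fun h => hxv h.symm
  refine hbf ⟨⟨⟨![v, d, x, e, c0], ?_⟩, ?_⟩⟩
  · intro i j hij
    fin_cases i <;> fin_cases j <;>
      simp_all [Matrix.cons_val_zero, Matrix.cons_val_one] <;>
      first
        | rfl
        | (exfalso; first
            | exact hvd' hij | exact hvd' hij.symm
            | exact hve' hij | exact hve' hij.symm
            | exact hvc0' hij | exact hvc0' hij.symm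
            | exact hxd' hij | exact hxd' hij.symm
            | exact hxe' hij | exact hxe' hij.symm
            | exact hxc0' hij | exact hxc0' hij.symm
            | exact hxv' hij | exact hxv' hij.symm
            | exact hde hij | exact hde hij.symm
            | exact hdc0 hij | exact hdc0 hij.symm
            | exact hec0 hij | exact hec0 hij.symm)
  · intro i j
    fin_cases i <;> fin_cases j <;>
      simp [banner, SimpleGraph.fromRel_adj] <;>
      first
        | exact G.irrefl
        | exact hvd | exact hvd.symm
        | exact hve | exact hve.symm
        | exact hvc0 | exact hvc0.symm
        | exact hxd | exact hxd.symm
        | exact hxe | exact hxe.symm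
        | exact hxv2 | exact fun h => hxv2 h.symm
        | exact hDE | exact fun h => hDE h.symm
        | exact hC0D | exact fun h => hC0D h.symm
        | exact hC0E | exact fun h => hC0E h.symm
        | exact fun h => hxc0 h.symm
        | exact hxc0
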